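/- Let σ_j(x;β), j = 0,…,k, be multinomial-logit probabilities with x_{(j)} ∈ ℝ^d, and let j̃ ∈ {1,…,k} attain max_j |βᵀx_{(j)}|. If βᵀx_{(j̃)} > 0, then log σ₀(x;β) ≤ −(k/(k+1))·|βᵀx_{(j̃)}|. -/

import Mathlib

set_option maxHeartbeats 1000000
open scoped BigOperators

/-- Multinomial-logit probability of the outside option `0`, with option utilities
`βᵀx_{(ℓ)}` and outside utility `0`. -/
noncomputable def mnlProb0 {d k : ℕ} (x : Fin k → EuclideanSpace ℝ (Fin d))
    (β : EuclideanSpace ℝ (Fin d)) : ℝ :=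
  1 / (1 + ∑ ℓ, Real.exp (inner ℝ (x ℓ) β : ℝ))

/-- If `j̃` attains `max_j |βᵀx_{(j)}|` and `βᵀx_{(j̃)} > 0`, then
`log σ₀(x;β) ≤ −(k/(k+1))·|βᵀx_{(j̃)}|`. -/
theorem log_outside_prob_bound (d k : ℕ) (x : Fin k → EuclideanSpace ℝ (Fin d))
    (β : EuclideanSpace ℝ (Fin d)) (jt : Fin k)
    (hmax : ∀ j, |(inner ℝ (x j) β : ℝ)| ≤ |(inner ℝ (x jt) β : ℝ)|)
    (hpos : 0 < (inner ℝ (x jt) β : ℝ)) :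
    Real.log (mnlProb0 x β) ≤ -((k : ℝ) / (k + 1)) * |(inner ℝ (x jt) β : ℝ)| := by
  set u := (inner ℝ (x jt) β : ℝ) with hu
  have hpos' : (0:ℝ) < 1 + ∑ ℓ, Real.exp (inner ℝ (x ℓ) β : ℝ) := by positivity
  have hS : Real.exp u ≤ ∑ ℓ, Real.exp (inner ℝ (x ℓ) β : ℝ) :=
    Finset.single_le_sum (f := fun ℓ => Real.exp (inner ℝ (x ℓ) β : ℝ)) (fun i _ => (Real.exp_pos _).le) (Finset.mem_univ jt)
  have hlog : u ≤ Real.log (1 + ∑ ℓ, Real.exp (inner ℝ (x ℓ) β : ℝ)) := by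
    calc u = Real.log (Real.exp u) := (Real.log_exp u).symm
    _ ≤ _ := Real.log_le_log (Real.exp_pos _) (by linarith)
  have hk : (k:ℝ)/(k+1) ≤ 1 := by
    rw [div_le_one (by positivity)]; linarith
  unfold mnlProb0
  rw [Real.log_div one_ne_zero (ne_of_gt hpos'), Real.log_one, zero_sub,
    abs_of_pos hpos]
  have : ((k:ℝ)/(k+1)) * u ≤ 1 * u :=
    mul_le_mul_of_nonneg_right hk hpos.le
  linarith
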